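/- Integrated Gradients is symmetry preserving: if F : ℝⁿ → ℝ is continuously differentiable and symmetric with respect to coordinates i and j (i.e., swapping the i-th and j-th components of any input leaves F unchanged), and if x_i = x_j and x'_i = x'_j for the target x and baseline x', then the IG attributions satisfy I_i(x) = I_j(x). -/

import Mathlib

/-- Integrated Gradients is symmetry preserving: if `F` is C¹ and symmetric in
coordinates `i` and `j`, and `x i = x j`, `x' i = x' j`, then the IG attributions
to coordinates `i` and `j` coincide. -/
theorem ig_symmetry_preserving {n : ℕ} (F : (Fin n → ℝ) → ℝ) (hF : ContDiff ℝ 1 F)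
    (i j : Fin n)
    (hsym : ∀ z : Fin n → ℝ, F (z ∘ Equiv.swap i j) = F z)
    (x x' : Fin n → ℝ) (hx : x i = x j) (hx' : x' i = x' j) :
    (x i - x' i) *
        ∫ t in (0:ℝ)..1, fderiv ℝ F (x' + t • (x - x')) (Pi.single i 1)
      = (x j - x' j) *
        ∫ t in (0:ℝ)..1, fderiv ℝ F (x' + t • (x - x')) (Pi.single j 1) := by
  rw [hx, hx']
  congr 1
  apply intervalIntegral.integral_congr
  intro t _
  set σ : (Fin n → ℝ) →L[ℝ] (Fin n → ℝ) :=
    (LinearMap.funLeft ℝ ℝ (Equiv.swap i j)).toContinuousLinearMap with hσdef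
  have hσapp : ∀ z : Fin n → ℝ, σ z = z ∘ Equiv.swap i j := fun _ => rfl
  set z : Fin n → ℝ := x' + t • (x - x') with hzdef
  have hij : z i = z j := by simp [hzdef, hx, hx']
  have hz : σ z = z := by
    funext k
    rw [hσapp]
    by_cases hk : k = i
    · subst hk
      simp [Equiv.swap_apply_left, ← hij]
    · by_cases hk' : k = j
      · subst hk'
        simp [Equiv.swap_apply_right, hij]
      · simp [Equiv.swap_apply_of_ne_of_ne hk hk']
  have hsingle : σ (Pi.single i 1) = Pi.single j 1 := by
    funext k
    rw [hσapp]
    by_cases hk : k = i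
    · subst hk
      simp [Equiv.swap_apply_left, Pi.single_apply, eq_comm]
    · by_cases hk' : k = j
      · subst hk'
        simp [Equiv.swap_apply_right, Pi.single_apply]
      · simp [Equiv.swap_apply_of_ne_of_ne hk hk', Pi.single_apply, hk, hk']
  have hFcomp : F ∘ σ = F := by
    funext w
    exact hsym w
  have hdF : DifferentiableAt ℝ F (σ z) := (hF.differentiable one_ne_zero).differentiableAt
  have hcomp : fderiv ℝ (F ∘ σ) z = (fderiv ℝ F (σ z)).comp σ := by
    rw [fderiv_comp z hdF σ.differentiableAt, σ.fderiv]
  rw [hFcomp] at hcomp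
  calc fderiv ℝ F z (Pi.single i 1)
      = ((fderiv ℝ F (σ z)).comp σ) (Pi.single i 1) := by rw [← hcomp]
    _ = fderiv ℝ F (σ z) (σ (Pi.single i 1)) := rfl
    _ = fderiv ℝ F z (Pi.single j 1) := by rw [hz, hsingle]
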